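/- Let a, T > 0, φ : ℝ → (-a,a) a homeomorphism with φ(0)=0, and f : [0,T]×ℝ×ℝ → ℝ continuous. Assume: (1) there are M₁ < M₂ such that for every u ∈ C¹([0,T]), if min u' ≥ M₂ then ∫₀ᵀ f(t,u(t),u'(t))dt ≠ 0, and if max u' ≤ M₁ then ∫₀ᵀ f(t,u(t),u'(t))dt ≠ 0. If u ∈ C¹ solves (φ(u'))' = λ N_f(u) + (1-λ)Q(N_f(u)) with u(0)=u'(0)=u'(T) for some λ ∈ [0,1], then there exists ω ∈ [0,T] with M₁ < u'(ω) < M₂. -/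

import Mathlib

open MeasureTheory intervalIntegral Set

theorem stmt_4 (a T : ℝ) (ha : 0 < a) (hT : 0 < T)
    (φ ψ : ℝ → ℝ) (hφc : Continuous φ) (hψc : Continuous ψ)
    (hmem : ∀ x, φ x ∈ Set.Ioo (-a) a)
    (hinv1 : ∀ x, ψ (φ x) = x)
    (hinv2 : ∀ y ∈ Set.Ioo (-a) a, φ (ψ y) = y)
    (hφ0 : φ 0 = 0)
    (f : ℝ → ℝ → ℝ → ℝ)
    (hf : Continuous fun p : ℝ × ℝ × ℝ => f p.1 p.2.1 p.2.2)
    (M₁ M₂ : ℝ) (hM : M₁ < M₂)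
    -- condition (1)
    (h1 : ∀ v : ℝ → ℝ, ContDiff ℝ 1 v → (∀ t ∈ Set.Icc (0:ℝ) T, M₂ ≤ deriv v t) →
      (∫ t in (0:ℝ)..T, f t (v t) (deriv v t)) ≠ 0)
    (h2 : ∀ v : ℝ → ℝ, ContDiff ℝ 1 v → (∀ t ∈ Set.Icc (0:ℝ) T, deriv v t ≤ M₁) →
      (∫ t in (0:ℝ)..T, f t (v t) (deriv v t)) ≠ 0)
    (lam : ℝ) (hlam : lam ∈ Set.Icc (0:ℝ) 1)
    (u : ℝ → ℝ) (hu : ContDiff ℝ 1 u)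
    (Qv : ℝ) (hQv : Qv = (1 / T) * ∫ t in (0:ℝ)..T, f t (u t) (deriv u t))
    (heq : ∀ t ∈ Set.Icc (0:ℝ) T,
      HasDerivAt (fun s => φ (deriv u s))
        (lam * f t (u t) (deriv u t) + (1 - lam) * Qv) t)
    (hbc1 : u 0 = deriv u 0) (hbc2 : deriv u 0 = deriv u T) :
    ∃ ω ∈ Set.Icc (0:ℝ) T, M₁ < deriv u ω ∧ deriv u ω < M₂ := by
  by_contra hcon
  push_neg at hcon
  have hu' : Continuous (deriv u) := hu.continuous_deriv le_rfl
  have hg : Continuous fun t => f t (u t) (deriv u t) :=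
    hf.comp (continuous_id.prodMk (hu.continuous.prodMk hu'))
  set I := ∫ t in (0:ℝ)..T, f t (u t) (deriv u t) with hI
  have hint : IntervalIntegrable (fun t => lam * f t (u t) (deriv u t) + (1-lam) * Qv)
      volume 0 T := ((continuous_const.mul hg).add continuous_const).intervalIntegrable 0 T
  have hftc : (∫ t in (0:ℝ)..T, (lam * f t (u t) (deriv u t) + (1-lam) * Qv)) =
      φ (deriv u T) - φ (deriv u 0) := by
    apply intervalIntegral.integral_eq_sub_of_hasDerivAt
    · intro t ht
      rw [Set.uIcc_of_le hT.le] at ht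
      exact heq t ht
    · exact hint
  have hsum : (∫ t in (0:ℝ)..T, (lam * f t (u t) (deriv u t) + (1-lam) * Qv)) = I := by
    rw [intervalIntegral.integral_add ((hg.intervalIntegrable 0 T).const_mul lam)
      intervalIntegrable_const, intervalIntegral.integral_const_mul,
      intervalIntegral.integral_const, ← hI, hQv]
    field_simp
    rw [smul_eq_mul, sub_zero, mul_div_assoc', mul_div_cancel_left₀ _ hT.ne']; ring
  have hI0 : I = 0 := by
    rw [← hsum, hftc, ← hbc2]; ring
  have hpt : ∀ t ∈ Set.Icc (0:ℝ) T, deriv u t ≤ M₁ ∨ M₂ ≤ deriv u t := by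
    intro t ht
    by_cases h : M₁ < deriv u t
    · exact Or.inr (hcon t ht h)
    · exact Or.inl (le_of_not_gt h)
  by_cases hall : ∀ t ∈ Set.Icc (0:ℝ) T, M₂ ≤ deriv u t
  · exact h1 u hu hall hI0
  · push_neg at hall
    obtain ⟨s₀, hs₀, hs₀'⟩ := hall
    have hs₀M : deriv u s₀ ≤ M₁ := (hpt s₀ hs₀).resolve_right (not_le.mpr hs₀')
    by_cases hall2 : ∀ t ∈ Set.Icc (0:ℝ) T, deriv u t ≤ M₁
    · exact h2 u hu hall2 hI0
    · push_neg at hall2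
      obtain ⟨t₀, ht₀, ht₀'⟩ := hall2
      have ht₀M : M₂ ≤ deriv u t₀ := (hpt t₀ ht₀).resolve_left (not_le.mpr ht₀')
      set c := (M₁ + M₂)/2 with hc
      have hc1 : M₁ < c := by simp [hc]; linarith
      have hc2 : c < M₂ := by simp [hc]; linarith
      have hcm : c ∈ Set.uIcc (deriv u s₀) (deriv u t₀) := by
        rw [Set.mem_uIcc]; left; constructor <;> linarith
      obtain ⟨x, hx, hxc⟩ := intermediate_value_uIcc hu'.continuousOn hcm
      have hx' : x ∈ Set.Icc (0:ℝ) T := Set.uIcc_subset_Icc hs₀ ht₀ hx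
      have := hcon x hx' (by rw [hxc]; exact hc1)
      rw [hxc] at this
      linarith
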